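/- If an ideal I on ω is a hereditary weak P-ideal (i.e., for no B ∉ I does I restricted to B contain an isomorphic copy of Fin⊗Fin), then I is unboring: there is no injection-witnessed copy of BI inside I, equivalently, for every f : ω → ω² there is A ∉ I with f[A] ∈ Fin⊗Fin and f|A constant or finite-to-one. -/

import Mathlib

open Set

/-- The ideal `Fin ⊗ Fin` on `ω²`: sets all but finitely many of whose
vertical sections are finite. -/
def FinFin : Set (Set (ℕ × ℕ)) :=
  {A | {n : ℕ | ¬ ({m : ℕ | (n, m) ∈ A}).Finite}.Finite}

/-- The `i`-th section of a subset of `ω³`. -/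
def BIsec (i : ℕ) (A : Set (ℕ × ℕ × ℕ)) : Set (ℕ × ℕ) := {p | (i, p) ∈ A}

/-- The ideal `BI` on `ω³`. -/
def BI : Set (Set (ℕ × ℕ × ℕ)) :=
  {A | ∃ k : ℕ, (∀ i < k, BIsec i A ∈ FinFin) ∧ ∀ i ≥ k, (BIsec i A).Finite}

/-- `I` is an ideal on `X`: contains all finite sets, closed under subsets and
finite unions, and proper. -/
def IsIdeal {X : Type*} (I : Set (Set X)) : Prop :=
  (∀ A : Set X, A.Finite → A ∈ I) ∧
  (∀ A B : Set X, A ∈ I → B ⊆ A → B ∈ I) ∧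
  (∀ A B : Set X, A ∈ I → B ∈ I → A ∪ B ∈ I) ∧
  (Set.univ : Set X) ∉ I

/-- `I|B` contains an isomorphic copy of `Fin ⊗ Fin`. -/
def FinFinCopyOn (I : Set (Set ℕ)) (B : Set ℕ) : Prop :=
  ∃ g : ℕ → ℕ × ℕ, Set.BijOn g B Set.univ ∧ ∀ C ∈ FinFin, B ∩ g ⁻¹' C ∈ I

/-- `I` is a hereditary weak P-ideal. -/
def HWP (I : Set (Set ℕ)) : Prop := ∀ B : Set ℕ, B ∉ I → ¬ FinFinCopyOn I B

/-- A set is in `FinFin` as soon as all its sections outside a finite set of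
indices are finite. -/
lemma mem_FinFin_of_forall {C : Set (ℕ × ℕ)} (s : Set ℕ) (hs : s.Finite)
    (h : ∀ n ∉ s, ({m : ℕ | (n, m) ∈ C}).Finite) : C ∈ FinFin := by
  refine hs.subset ?_
  intro n hn
  by_contra hns
  exact hn (h n hns)

lemma finite_mem_FinFin {C : Set (ℕ × ℕ)} (hC : C.Finite) : C ∈ FinFin := by
  refine mem_FinFin_of_forall ∅ finite_empty fun n _ => ?_
  exact (hC.image Prod.snd).subset fun m hm => ⟨(n, m), hm, rfl⟩

lemma biUnion_mem_ideal {X : Type*} {I : Set (Set X)} (hI : IsIdeal I) {s : Set ℕ}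
    (hs : s.Finite) {f : ℕ → Set X} (hf : ∀ n ∈ s, f n ∈ I) : (⋃ n ∈ s, f n) ∈ I := by
  refine Set.Finite.induction_on
    (motive := fun s _ => (∀ n ∈ s, f n ∈ I) → (⋃ n ∈ s, f n) ∈ I) s hs ?_ ?_ hf
  · intro _
    simpa using hI.1 ∅ finite_empty
  · intro a t ha hts ih hf'
    rw [biUnion_insert]
    exact hI.2.2.1 _ _ (hf' _ (mem_insert _ _)) (ih fun n hn => hf' n (mem_insert_of_mem _ hn))

/-- Key lemma: if `I` is a hereditary weak P-ideal, `B ∉ I`, and every fiber of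
`q` intersected with `B` is in `I`, then there is an `I`-positive `A ⊆ B`
meeting every fiber of `q` finitely. -/
lemma key_lemma (I : Set (Set ℕ)) (hI : IsIdeal I) (h : HWP I) {B : Set ℕ} (hB : B ∉ I)
    (q : ℕ → ℕ) (hq : ∀ n, B ∩ q ⁻¹' {n} ∈ I) :
    ∃ A, A ⊆ B ∧ A ∉ I ∧ ∀ n, (A ∩ q ⁻¹' {n}).Finite := by
  classical
  by_contra hcon
  push_neg at hcon
  have H : ∀ A, A ⊆ B → (∀ n, (A ∩ q ⁻¹' {n}).Finite) → A ∈ I := by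
    intro A hAB hfin
    by_contra hA
    obtain ⟨n, hn⟩ := hcon A hAB hA
    exact hn (hfin n)
  set P : ℕ → Set ℕ := fun n => B ∩ q ⁻¹' {n} with hP
  set S : Set ℕ := {n | (P n).Infinite} with hSdef
  have hPfin : ∀ n ∉ S, (P n).Finite := fun n hn => not_infinite.mp hn
  have hR : B ∩ q ⁻¹' Sᶜ ∈ I := by
    refine H _ inter_subset_left fun n => ?_
    by_cases hn : n ∈ S
    · have : B ∩ q ⁻¹' Sᶜ ∩ q ⁻¹' {n} = ∅ := by
        ext x
        simp only [mem_inter_iff, mem_preimage, mem_compl_iff, mem_singleton_iff,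
          mem_empty_iff_false, iff_false, not_and]
        rintro ⟨_, hxS⟩ rfl
        exact hxS hn
      rw [this]; exact finite_empty
    · exact (hPfin n hn).subset fun x hx => ⟨hx.1.1, hx.2⟩
  by_cases hS : S.Finite
  · -- only finitely many infinite fibers: B is a finite union of I-sets, contradiction
    have hsub : B ⊆ (B ∩ q ⁻¹' Sᶜ) ∪ ⋃ n ∈ S, P n := by
      intro x hx
      by_cases hqx : q x ∈ S
      · exact Or.inr (mem_biUnion hqx ⟨hx, rfl⟩)
      · exact Or.inl ⟨hx, hqx⟩
    exact hB (hI.2.1 _ _ (hI.2.2.1 _ _ hR (biUnion_mem_ideal hI hS fun n _ => hq n)) hsub)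
  · -- infinitely many infinite fibers: build a copy of Fin⊗Fin on B
    have hS' : (setOf (· ∈ S)).Infinite := by exact hS
    set e : ℕ → ℕ := Nat.nth (· ∈ S) with he_def
    set R : Set ℕ := B ∩ q ⁻¹' Sᶜ with hRdef
    set Q : ℕ → Set ℕ := fun k => P (e k) ∪ (if k = 0 then R else ∅) with hQdef
    have hPQ : ∀ k, P (e k) ⊆ Q k := fun k => subset_union_left
    have hQB : ∀ k, Q k ⊆ B := by
      intro k
      refine union_subset inter_subset_left ?_
      split
      · exact inter_subset_left
      · exact empty_subset _
    have hQI : ∀ k, Q k ∈ I := by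
      intro k
      refine hI.2.2.1 _ _ (hq (e k)) ?_
      split
      · exact hR
      · exact hI.1 ∅ finite_empty
    have heS : ∀ k, e k ∈ S := fun k => Nat.nth_mem_of_infinite hS' k
    have hQinf : ∀ k, (setOf (· ∈ Q k)).Infinite := by
      intro k
      change (Q k).Infinite
      exact (heS k).mono (hPQ k)
    set kIdx : ℕ → ℕ := fun x => if q x ∈ S then Nat.count (· ∈ S) (q x) else 0 with hkIdx
    have hmemQ : ∀ x ∈ B, x ∈ Q (kIdx x) := by
      intro x hx
      by_cases hqx : q x ∈ S
      · have he : e (Nat.count (· ∈ S) (q x)) = q x := Nat.nth_count hqx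
        simp only [hkIdx, if_pos hqx]
        exact hPQ _ (by rw [he]; exact ⟨hx, rfl⟩)
      · simp only [hkIdx, if_neg hqx]
        exact mem_union_right _ (by rw [if_pos rfl]; exact ⟨hx, hqx⟩)
    have hUniq : ∀ x k, x ∈ Q k → kIdx x = k := by
      intro x k hxk
      rcases hxk with hxP | hxR
      · have hq1 : q x = e k := hxP.2
        have hqx : q x ∈ S := hq1 ▸ heS k
        simp only [hkIdx, if_pos hqx]
        rw [hq1, Nat.count_nth_of_infinite hS']
      · by_cases hk : k = 0
        · rw [if_pos hk] at hxR
          subst hk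
          simp only [hkIdx, if_neg hxR.2]
        · rw [if_neg hk] at hxR
          exact absurd hxR (notMem_empty x)
    set g : ℕ → ℕ × ℕ := fun x => (kIdx x, Nat.count (· ∈ Q (kIdx x)) x) with hg
    set rcv : ℕ × ℕ → ℕ := fun p => Nat.nth (· ∈ Q p.1) p.2 with hrcv
    have hrec : ∀ x ∈ B, rcv (g x) = x := fun x hx => Nat.nth_count (hmemQ x hx)
    have hbij : BijOn g B univ := by
      refine ⟨fun x _ => mem_univ _, ?_, ?_⟩
      · intro x hx y hy hxy
        have := congrArg rcv hxy
        rwa [hrec x hx, hrec y hy] at this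
      · rintro ⟨k, m⟩ _
        have hx : rcv (k, m) ∈ Q k := Nat.nth_mem_of_infinite (hQinf k) m
        refine ⟨rcv (k, m), hQB k hx, ?_⟩
        have hk : kIdx (rcv (k, m)) = k := hUniq _ _ hx
        show (kIdx (rcv (k, m)), Nat.count (· ∈ Q (kIdx (rcv (k, m)))) (rcv (k, m))) = (k, m)
        rw [hk]
        exact Prod.ext rfl (Nat.count_nth_of_infinite (hQinf k) m)
    have hcopy : ∀ C ∈ FinFin, B ∩ g ⁻¹' C ∈ I := by
      intro C hC
      set T : Set ℕ := {k | ¬ ({m : ℕ | (k, m) ∈ C}).Finite} with hTdef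
      have hT : T.Finite := hC
      set D : Set ℕ := (B ∩ g ⁻¹' C) \ (⋃ k ∈ T, Q k) with hDdef
      have hD : D ∈ I := by
        refine H D (fun x hx => hx.1.1) ?_
        intro n
        by_cases hn : n ∈ S
        · set k := Nat.count (· ∈ S) n with hkdef
          have he : e k = n := Nat.nth_count hn
          have hPn : P n ⊆ Q k := by rw [← he]; exact hPQ k
          by_cases hkT : k ∈ T
          · have : D ∩ q ⁻¹' {n} = ∅ := by
              ext x
              simp only [mem_inter_iff, mem_empty_iff_false, iff_false, not_and]
              intro hxD hxq
              exact hxD.2 (mem_biUnion hkT (hPn ⟨hxD.1.1, hxq⟩))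
            rw [this]; exact finite_empty
          · have hsect : ({m : ℕ | (k, m) ∈ C}).Finite := not_not.mp hkT
            refine (hsect.image (Nat.nth (· ∈ Q k))).subset ?_
            rintro x ⟨hxD, hxq⟩
            have hxB : x ∈ B := hxD.1.1
            have hxQ : x ∈ Q k := hPn ⟨hxB, hxq⟩
            have hk : kIdx x = k := hUniq x k hxQ
            have hgx : g x ∈ C := hxD.1.2
            have hgx' : (k, Nat.count (· ∈ Q k) x) ∈ C := by
              have : g x = (k, Nat.count (· ∈ Q k) x) := by rw [hg]; simp only; rw [hk]
              rwa [this] at hgx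
            exact ⟨Nat.count (· ∈ Q k) x, hgx', Nat.nth_count hxQ⟩
        · exact (hPfin n hn).subset fun x hx => ⟨hx.1.1.1, hx.2⟩
      have hsub : B ∩ g ⁻¹' C ⊆ D ∪ ⋃ k ∈ T, Q k := by
        intro x hx
        by_cases hxU : x ∈ ⋃ k ∈ T, Q k
        · exact Or.inr hxU
        · exact Or.inl ⟨hx, hxU⟩
      exact hI.2.1 _ _ (hI.2.2.1 _ _ hD (biUnion_mem_ideal hI hT fun k _ => hQI k)) hsub
    exact h B hB ⟨g, hbij, hcopy⟩

theorem stmt_7 (I : Set (Set ℕ)) (hI : IsIdeal I) (h : HWP I) :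
    (¬ ∃ f : ℕ → ℕ × ℕ × ℕ, Function.Injective f ∧ ∀ A ∈ BI, f ⁻¹' A ∈ I) ∧
    (∀ f : ℕ → ℕ × ℕ, ∃ A : Set ℕ, A ∉ I ∧ f '' A ∈ FinFin ∧
      ((∃ c, ∀ n ∈ A, f n = c) ∨ ∀ p : ℕ × ℕ, (A ∩ f ⁻¹' {p}).Finite)) := by
  constructor
  · rintro ⟨f, finj, hf⟩
    by_cases hE : ∀ i, (fun x => (f x).1) ⁻¹' {i} ∈ I
    · -- all "columns" small: get A meeting each column finitely, then f '' A ∈ BI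
      obtain ⟨A, hAB, hA, hfin⟩ := key_lemma I hI h hI.2.2.2 (fun x => (f x).1)
        (fun n => by rw [univ_inter]; exact hE n)
      apply hA
      refine hI.2.1 _ _ (hf (f '' A) ?_) (subset_preimage_image f A)
      refine ⟨0, fun i hi => absurd hi (Nat.not_lt_zero i), fun i _ => ?_⟩
      have hsub : BIsec i (f '' A) ⊆ (fun x => (f x).2) '' (A ∩ (fun x => (f x).1) ⁻¹' {i}) := by
        rintro p hp
        obtain ⟨x, hxA, hfx⟩ := hp
        exact ⟨x, ⟨hxA, by simp [hfx]⟩, by simp [hfx]⟩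
      exact ((hfin i).image _).subset hsub
    · push_neg at hE
      obtain ⟨i, hEi⟩ := hE
      have hq : ∀ m, (fun x => (f x).1) ⁻¹' {i} ∩ (fun x => (f x).2.1) ⁻¹' {m} ∈ I := by
        intro m
        have hU : {a : ℕ × ℕ × ℕ | a.1 = i ∧ a.2.1 = m} ∈ BI := by
          refine ⟨i + 1, fun j _ => ?_, fun j hj => ?_⟩
          · by_cases hji : j = i
            · subst hji
              refine mem_FinFin_of_forall {m} (finite_singleton m) fun n hn => ?_
              have : {r : ℕ | (n, r) ∈ BIsec j {a : ℕ × ℕ × ℕ | a.1 = j ∧ a.2.1 = m}} = ∅ := by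
                ext r
                simp only [BIsec, mem_setOf_eq, mem_empty_iff_false, iff_false]
                rintro ⟨-, rfl⟩
                exact hn rfl
              rw [this]; exact finite_empty
            · refine finite_mem_FinFin ?_
              have : BIsec j {a : ℕ × ℕ × ℕ | a.1 = i ∧ a.2.1 = m} = ∅ := by
                ext p
                simp only [BIsec, mem_setOf_eq, mem_empty_iff_false, iff_false]
                rintro ⟨hj', -⟩
                exact hji hj'
              rw [this]; exact finite_empty
          · have : BIsec j {a : ℕ × ℕ × ℕ | a.1 = i ∧ a.2.1 = m} = ∅ := by
              ext p
              simp only [BIsec, mem_setOf_eq, mem_empty_iff_false, iff_false]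
              rintro ⟨hj', -⟩
              omega
            rw [this]; exact finite_empty
        have := hf _ hU
        refine hI.2.1 _ _ this fun x hx => ?_
        exact ⟨hx.1, hx.2⟩
      obtain ⟨A, hAB, hA, hfin⟩ := key_lemma I hI h hEi (fun x => (f x).2.1) hq
      apply hA
      refine hI.2.1 _ _ (hf (f '' A) ?_) (subset_preimage_image f A)
      refine ⟨i + 1, fun j _ => ?_, fun j hj => ?_⟩
      · by_cases hji : j = i
        · subst hji
          refine mem_FinFin_of_forall ∅ finite_empty fun n _ => ?_
          have hsub : {r : ℕ | (n, r) ∈ BIsec j (f '' A)} ⊆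
              (fun x => (f x).2.2) '' (A ∩ (fun x => (f x).2.1) ⁻¹' {n}) := by
            intro r hr
            obtain ⟨x, hxA, hfx⟩ := hr
            exact ⟨x, ⟨hxA, by simp [hfx]⟩, by simp [hfx]⟩
          exact ((hfin n).image _).subset hsub
        · refine finite_mem_FinFin ?_
          have : BIsec j (f '' A) = ∅ := by
            ext p
            simp only [BIsec, mem_setOf_eq, mem_empty_iff_false, iff_false]
            rintro ⟨x, hxA, hfx⟩
            have : (f x).1 = i := hAB hxA
            rw [hfx] at this
            exact hji this
          rw [this]; exact finite_empty
      · have : BIsec j (f '' A) = ∅ := by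
          ext p
          simp only [BIsec, mem_setOf_eq, mem_empty_iff_false, iff_false]
          rintro ⟨x, hxA, hfx⟩
          have hxi : (f x).1 = i := hAB hxA
          rw [hfx] at hxi
          omega
        rw [this]; exact finite_empty
  · intro f
    by_cases hfib : ∀ p, f ⁻¹' {p} ∈ I
    · by_cases hcol : ∀ i, (fun x => (f x).1) ⁻¹' {i} ∈ I
      · obtain ⟨A, hAB, hA, hfin⟩ := key_lemma I hI h hI.2.2.2 (fun x => (f x).1)
          (fun n => by rw [univ_inter]; exact hcol n)
        refine ⟨A, hA, ?_, Or.inr fun p => ?_⟩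
        · refine mem_FinFin_of_forall ∅ finite_empty fun n _ => ?_
          have hsub : {m : ℕ | (n, m) ∈ f '' A} ⊆
              (fun x => (f x).2) '' (A ∩ (fun x => (f x).1) ⁻¹' {n}) := by
            intro m hm
            obtain ⟨x, hxA, hfx⟩ := hm
            exact ⟨x, ⟨hxA, by simp [hfx]⟩, by simp [hfx]⟩
          exact ((hfin n).image _).subset hsub
        · refine ((hfin p.1).subset ?_)
          rintro x ⟨hxA, hxp⟩
          have : f x = p := hxp
          exact ⟨hxA, by simp [this]⟩
      · push_neg at hcol
        obtain ⟨i, hi⟩ := hcol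
        have hq : ∀ m, (fun x => (f x).1) ⁻¹' {i} ∩ (fun x => (f x).2) ⁻¹' {m} ∈ I := by
          intro m
          refine hI.2.1 _ _ (hfib (i, m)) fun x hx => ?_
          have h1 : (f x).1 = i := hx.1
          have h2 : (f x).2 = m := hx.2
          simp only [mem_preimage, mem_singleton_iff]
          exact Prod.ext h1 h2
        obtain ⟨A, hAB, hA, hfin⟩ := key_lemma I hI h hi (fun x => (f x).2) hq
        refine ⟨A, hA, ?_, Or.inr fun p => ?_⟩
        · refine mem_FinFin_of_forall {i} (finite_singleton i) fun n hn => ?_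
          have : {m : ℕ | (n, m) ∈ f '' A} = ∅ := by
            ext m
            simp only [mem_setOf_eq, mem_empty_iff_false, iff_false]
            rintro ⟨x, hxA, hfx⟩
            have hxi : (f x).1 = i := hAB hxA
            rw [hfx] at hxi
            exact hn (by simpa using hxi)
          rw [this]; exact finite_empty
        · refine (hfin p.2).subset ?_
          rintro x ⟨hxA, hxp⟩
          have : f x = p := hxp
          exact ⟨hxA, by simp [this]⟩
    · push_neg at hfib
      obtain ⟨p, hp⟩ := hfib
      refine ⟨f ⁻¹' {p}, hp, ?_, Or.inl ⟨p, fun n hn => hn⟩⟩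
      exact finite_mem_FinFin ((finite_singleton p).subset (image_preimage_subset f _))
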